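/- arXiv:1807.05000 — 2 statements merged into one kernel-verified Lean document; each statement's English description precedes it below -/
import Mathlib

section
/- Let s(u) = Σ_{z=0}^{⌊u/2⌋} 4^z·C(u−2z, z). Then for all integers m ≥ 6, s(m−2) + 3·s(m−4) + 4·s(m−6) = 2^{m−2}, and consequently 2·(s(m−2) + s(m−3) + 2·s(m−4)) = 2^{m−1}. -/
open Finset

/-- `s u = Σ_{z=0}^{⌊u/2⌋} 4^z · C(u−2z, z)`. -/
def s (u : ℕ) : ℕ := ∑ z ∈ Finset.range (u / 2 + 1), 4 ^ z * Nat.choose (u - 2 * z) z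

lemma s_rec (u : ℕ) : s (u + 3) = s (u + 2) + 4 * s u := by
  obtain ⟨k, rfl⟩ | ⟨k, rfl⟩ := Nat.even_or_odd u
  · -- u = k + k
    have h1 : (k + k + 3) / 2 + 1 = k + 2 := by omega
    have h2 : (k + k + 2) / 2 + 1 = k + 2 := by omega
    have h3 : (k + k) / 2 + 1 = k + 1 := by omega
    simp only [s, h1, h2, h3]
    rw [Finset.sum_range_succ' (fun z => 4 ^ z * Nat.choose (k + k + 3 - 2 * z) z) (k+1),
        Finset.sum_range_succ' (fun z => 4 ^ z * Nat.choose (k + k + 2 - 2 * z) z) (k+1)]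
    have key : ∀ i ∈ Finset.range (k+1),
        4 ^ (i+1) * Nat.choose (k + k + 3 - 2 * (i+1)) (i+1)
          = 4 ^ (i+1) * Nat.choose (k + k + 2 - 2 * (i+1)) (i+1)
            + 4 * (4 ^ i * Nat.choose (k + k - 2 * i) i) := by
      intro i hi
      rw [Finset.mem_range] at hi
      have e1 : k + k + 3 - 2 * (i+1) = (k + k - 2 * i) + 1 := by omega
      have e2 : k + k + 2 - 2 * (i+1) = k + k - 2 * i := by omega
      rw [e1, e2, Nat.choose_succ_succ]
      ring
    rw [Finset.sum_congr rfl key, Finset.sum_add_distrib, ← Finset.mul_sum]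
    simp only [Nat.choose_zero_right, pow_zero, one_mul]
    ring
  · -- u = 2*k + 1
    have h1 : (2 * k + 1 + 3) / 2 + 1 = k + 3 := by omega
    have h2 : (2 * k + 1 + 2) / 2 + 1 = k + 2 := by omega
    have h3 : (2 * k + 1) / 2 + 1 = k + 1 := by omega
    simp only [s, h1, h2, h3]
    rw [Finset.sum_range_succ' (fun z => 4 ^ z * Nat.choose (2 * k + 1 + 3 - 2 * z) z) (k+2),
        Finset.sum_range_succ' (fun z => 4 ^ z * Nat.choose (2 * k + 1 + 2 - 2 * z) z) (k+1)]
    -- extend the two RHS sums to range (k+2) with vanishing top terms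
    have ext1 : ∑ i ∈ Finset.range (k+2),
        4 ^ (i+1) * Nat.choose (2 * k + 1 + 2 - 2 * (i+1)) (i+1)
        = ∑ i ∈ Finset.range (k+1),
        4 ^ (i+1) * Nat.choose (2 * k + 1 + 2 - 2 * (i+1)) (i+1) := by
      rw [Finset.sum_range_succ]
      have : 2 * k + 1 + 2 - 2 * (k+1+1) = 0 := by omega
      rw [this, Nat.choose_eq_zero_of_lt (by omega)]
      simp
    have ext2 : ∑ z ∈ Finset.range (k+2), 4 ^ z * Nat.choose (2 * k + 1 - 2 * z) z
        = ∑ z ∈ Finset.range (k+1), 4 ^ z * Nat.choose (2 * k + 1 - 2 * z) z := by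
      rw [Finset.sum_range_succ]
      have : 2 * k + 1 - 2 * (k+1) = 0 := by omega
      rw [this, Nat.choose_eq_zero_of_lt (by omega)]
      simp
    rw [← ext1, ← ext2]
    have key : ∀ i ∈ Finset.range (k+2),
        4 ^ (i+1) * Nat.choose (2 * k + 1 + 3 - 2 * (i+1)) (i+1)
          = 4 ^ (i+1) * Nat.choose (2 * k + 1 + 2 - 2 * (i+1)) (i+1)
            + 4 * (4 ^ i * Nat.choose (2 * k + 1 - 2 * i) i) := by
      intro i hi
      rw [Finset.mem_range] at hi
      rcases le_or_gt i k with h | h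
      · have e1 : 2 * k + 1 + 3 - 2 * (i+1) = (2 * k + 1 - 2 * i) + 1 := by omega
        have e2 : 2 * k + 1 + 2 - 2 * (i+1) = 2 * k + 1 - 2 * i := by omega
        rw [e1, e2, Nat.choose_succ_succ]
        ring
      · have hik : i = k + 1 := by omega
        subst hik
        have e1 : 2 * k + 1 + 3 - 2 * (k+1+1) = 0 := by omega
        have e2 : 2 * k + 1 + 2 - 2 * (k+1+1) = 0 := by omega
        have e3 : 2 * k + 1 - 2 * (k+1) = 0 := by omega
        rw [e1, e2, e3]
        simp
    rw [Finset.sum_congr rfl key, Finset.sum_add_distrib, ← Finset.mul_sum]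
    simp only [Nat.choose_zero_right, pow_zero, one_mul]
    ring

lemma s_key (n : ℕ) : s (n + 4) + 3 * s (n + 2) + 4 * s n = 2 ^ (n + 4) := by
  induction n with
  | zero =>
    norm_num [s, Finset.sum_range_succ]
  | succ n ih =>
    have h1 : s (n+5) = s (n+4) + 4 * s (n+2) := by
      simpa [show n+2+3 = n+5 by omega, show n+2+2 = n+4 by omega] using s_rec (n+2)
    have h2 : s (n+3) = s (n+2) + 4 * s n := s_rec n
    have h3 : s (n+4) = s (n+3) + 4 * s (n+1) := by
      simpa [show n+1+3 = n+4 by omega, show n+1+2 = n+3 by omega] using s_rec (n+1)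
    have hp : (2:ℕ) ^ (n + 1 + 4) = 2 * 2 ^ (n + 4) := by ring
    show s (n+5) + 3 * s (n+3) + 4 * s (n+1) = 2 ^ (n+1+4)
    omega

theorem s_combination_shifted (m : ℕ) (hm : 6 ≤ m) :
    s (m - 2) + 3 * s (m - 4) + 4 * s (m - 6) = 2 ^ (m - 2) ∧
    2 * (s (m - 2) + s (m - 3) + 2 * s (m - 4)) = 2 ^ (m - 1) := by
  obtain ⟨n, rfl⟩ := Nat.exists_eq_add_of_le hm
  have e2 : 6 + n - 2 = n + 4 := by omega
  have e3 : 6 + n - 3 = n + 3 := by omega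
  have e4 : 6 + n - 4 = n + 2 := by omega
  have e6 : 6 + n - 6 = n := by omega
  have e1 : 6 + n - 1 = n + 5 := by omega
  rw [e1, e2, e3, e4, e6]
  have hk := s_key n
  have hr := s_rec n
  have hp : (2:ℕ) ^ (n + 5) = 2 * 2 ^ (n + 4) := by ring
  constructor
  · exact hk
  · omega
end

section
/- Define f̄_x(m,p) = C(x−m+p+α, m+β)·C(x+m−p+γ, p+δ), ḡ_x(m,p) = C(x−m+p−1+α, m+β)·C(x+m−p+γ, p+δ), h̄_x(m,p) = C(x−m+p−1+α, m+β)·C(x+m−p+γ, p−1+δ). Then f̄_{x+1}(m,p) = f̄_x(m,p) + f̄_x(m−1,p−1) + ḡ_x(m−1,p) + ḡ_x(m−1,p−1) + h̄_x(m,p) + h̄_x(m−1,p); ḡ_{x+1}(m,p) = f̄_x(m,p) + ḡ_x(m−1,p−1) + h̄_x(m,p); h̄_{x+1}(m,p) = f̄_x(m,p−1) + ḡ_x(m−1,p−1) + h̄_x(m−1,p−1), in the range where all binomial arguments are nonnegative. -/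
open Finset

/-- Binomial coefficient on the integers, with `C a b = 0` unless `0 ≤ b ≤ a`. -/
def C (a b : ℤ) : ℚ := if 0 ≤ b ∧ b ≤ a then (Nat.choose a.toNat b.toNat : ℚ) else 0

def fb (α β γ δ x m p : ℤ) : ℚ := C (x - m + p + α) (m + β) * C (x + m - p + γ) (p + δ)
def gb (α β γ δ x m p : ℤ) : ℚ := C (x - m + p - 1 + α) (m + β) * C (x + m - p + γ) (p + δ)
def hb (α β γ δ x m p : ℤ) : ℚ := C (x - m + p - 1 + α) (m + β) * C (x + m - p + γ) (p - 1 + δ)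

lemma C_eq_choose (a b : ℤ) (ha : 0 ≤ a) (hb : 0 ≤ b) :
    C a b = (Nat.choose a.toNat b.toNat : ℚ) := by
  unfold C
  split_ifs with h
  · rfl
  · push_neg at h
    have hab : a < b := h hb
    rw [Nat.choose_eq_zero_of_lt (by omega)]
    simp

lemma pascal (a b : ℤ) (ha : 0 ≤ a) : C (a + 1) b = C a b + C a (b - 1) := by
  rcases lt_or_ge b 0 with hb | hb
  · unfold C
    rw [if_neg (by omega), if_neg (by omega), if_neg (by omega)]
    simp
  rcases eq_or_lt_of_le hb with hb0 | hb1
  · subst_vars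
    unfold C
    rw [if_pos ⟨le_refl 0, by omega⟩, if_pos ⟨le_refl 0, ha⟩, if_neg (by omega)]
    simp
  · rw [C_eq_choose _ _ (by omega) (by omega), C_eq_choose _ _ ha (by omega),
      C_eq_choose _ _ ha (by omega)]
    have h1 : (a + 1).toNat = a.toNat + 1 := by omega
    have h2 : b.toNat = (b - 1).toNat + 1 := by omega
    rw [h1, h2, Nat.choose_succ_succ]
    push_cast
    ring

lemma aux (A B M P : ℤ) (hA : 0 ≤ A - 1) (hB : 0 ≤ B - 1) :
    C (A + 1) M * C (B + 1) P =
        C A M * C B P + C A (M - 1) * C B (P - 1) + C A (M - 1) * C (B - 1) P +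
          C (A - 1) (M - 1) * C B (P - 1) + C (A - 1) M * C B (P - 1) +
          C A (M - 1) * C (B - 1) (P - 1) ∧
    C A M * C (B + 1) P =
        C A M * C B P + C (A - 1) (M - 1) * C B (P - 1) + C (A - 1) M * C B (P - 1) ∧
    C A M * C (B + 1) (P - 1) =
        C (A - 1) M * C (B + 1) (P - 1) + C (A - 1) (M - 1) * C B (P - 1) +
          C (A - 1) (M - 1) * C B (P - 1 - 1) := by
  have eA1 : C (A + 1) M = C A M + C A (M - 1) := pascal A M (by omega)
  have eB1 : C (B + 1) P = C B P + C B (P - 1) := pascal B P (by omega)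
  have eA : C A M = C (A - 1) M + C (A - 1) (M - 1) := by
    have := pascal (A - 1) M hA; rwa [sub_add_cancel] at this
  have eB : C B P = C (B - 1) P + C (B - 1) (P - 1) := by
    have := pascal (B - 1) P hB; rwa [sub_add_cancel] at this
  have eBP : C (B + 1) (P - 1) = C B (P - 1) + C B (P - 1 - 1) :=
    pascal B (P - 1) (by omega)
  refine ⟨?_, ?_, ?_⟩
  · rw [eA1, eB1, eA, eB]; ring
  · rw [eB1, eA]; ring
  · rw [eBP, eA]; ring

theorem fgh_bar_recurrence (α β γ δ x m p : ℤ)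
    (h1 : 0 ≤ x - m + p + α - 1) (h2 : 0 ≤ x + m - p + γ - 1) :
    fb α β γ δ (x + 1) m p =
        fb α β γ δ x m p + fb α β γ δ x (m - 1) (p - 1) + gb α β γ δ x (m - 1) p +
          gb α β γ δ x (m - 1) (p - 1) + hb α β γ δ x m p + hb α β γ δ x (m - 1) p ∧
    gb α β γ δ (x + 1) m p =
        fb α β γ δ x m p + gb α β γ δ x (m - 1) (p - 1) + hb α β γ δ x m p ∧
    hb α β γ δ (x + 1) m p =
        fb α β γ δ x m (p - 1) + gb α β γ δ x (m - 1) (p - 1) + hb α β γ δ x (m - 1) (p - 1) := by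
  obtain ⟨e1, e2, e3⟩ := aux (x - m + p + α) (x + m - p + γ) (m + β) (p + δ) (by omega) (by omega)
  unfold fb gb hb
  refine ⟨?_, ?_, ?_⟩
  · rw [show x + 1 - m + p + α = x - m + p + α + 1 by ring,
      show x + 1 + m - p + γ = x + m - p + γ + 1 by ring,
      show x - (m - 1) + (p - 1) + α = x - m + p + α by ring,
      show m - 1 + β = m + β - 1 by ring,
      show x + (m - 1) - (p - 1) + γ = x + m - p + γ by ring,
      show p - 1 + δ = p + δ - 1 by ring,
      show x - (m - 1) + p - 1 + α = x - m + p + α by ring,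
      show x + (m - 1) - p + γ = x + m - p + γ - 1 by ring,
      show x - (m - 1) + (p - 1) - 1 + α = x - m + p + α - 1 by ring,
      show x - m + p - 1 + α = x - m + p + α - 1 by ring]
    linarith [e1]
  · rw [show x + 1 - m + p - 1 + α = x - m + p + α by ring,
      show x + 1 + m - p + γ = x + m - p + γ + 1 by ring,
      show x - (m - 1) + (p - 1) - 1 + α = x - m + p + α - 1 by ring,
      show m - 1 + β = m + β - 1 by ring,
      show x + (m - 1) - (p - 1) + γ = x + m - p + γ by ring,
      show p - 1 + δ = p + δ - 1 by ring,
      show x - m + p - 1 + α = x - m + p + α - 1 by ring]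
    linarith [e2]
  · rw [show x + 1 - m + p - 1 + α = x - m + p + α by ring,
      show x + 1 + m - p + γ = x + m - p + γ + 1 by ring,
      show p - 1 + δ = p + δ - 1 by ring,
      show x - m + (p - 1) + α = x - m + p + α - 1 by ring,
      show x + m - (p - 1) + γ = x + m - p + γ + 1 by ring,
      show x - (m - 1) + (p - 1) - 1 + α = x - m + p + α - 1 by ring,
      show m - 1 + β = m + β - 1 by ring,
      show x + (m - 1) - (p - 1) + γ = x + m - p + γ by ring,
      show p - 1 - 1 + δ = p + δ - 1 - 1 by ring]
    linarith [e3]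
end
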